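/- Let A_1, ..., A_N be events on a probability space such that P(A_i) ≤ 1 − ω for each i and P(A_i ∩ A_j) ≤ P(A_i)·P(A_j) + δ for all i ≠ j (for some ω > 0 and δ ≥ 0). Then P(A_1 ∩ ... ∩ A_N) ≤ (1/ω²)(δ + 3/N). -/

import Mathlib

open MeasureTheory

/-- **Pairwise almost-independence sieve bound.** If `A₁, …, A_N` are events with
`P(Aᵢ) ≤ 1 − ω` for each `i` and `P(Aᵢ ∩ Aⱼ) ≤ P(Aᵢ)·P(Aⱼ) + δ` for `i ≠ j`, then
`P(A₁ ∩ ⋯ ∩ A_N) ≤ (1/ω²)(δ + 3/N)`. -/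
theorem pairwise_sieve_bound {Ω : Type*} [MeasurableSpace Ω]
    (μ : Measure Ω) [IsProbabilityMeasure μ]
    (N : ℕ) (hN : 1 ≤ N) (A : Fin N → Set Ω) (hAmeas : ∀ i, MeasurableSet (A i))
    (ω δ : ℝ) (hω : 0 < ω) (hω1 : ω ≤ 1) (hδ : 0 ≤ δ)
    (hbound : ∀ i, (μ (A i)).toReal ≤ 1 - ω)
    (hpair : ∀ i j, i ≠ j →
      (μ (A i ∩ A j)).toReal ≤ (μ (A i)).toReal * (μ (A j)).toReal + δ) :
    (μ (⋂ i, A i)).toReal ≤ (1 / ω ^ 2) * (δ + 3 / N) := by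
  classical
  set p : Fin N → ℝ := fun i => (μ (A i)).toReal with hp
  set q : Fin N → ℝ := fun i => (μ (A i)ᶜ).toReal with hqdef
  have hq_eq : ∀ i, q i = 1 - p i := by
    intro i
    simp only [hqdef, hp, prob_compl_eq_one_sub (hAmeas i)]
    rw [ENNReal.toReal_sub_of_le prob_le_one ENNReal.one_ne_top, ENNReal.toReal_one]
  have hqω : ∀ i, ω ≤ q i := fun i => by
    have := hbound i; rw [hq_eq i]; linarith
  have hq1 : ∀ i, q i ≤ 1 := fun i => by
    simp only [hqdef]
    exact ENNReal.toReal_le_of_le_ofReal zero_le_one (by simpa using prob_le_one)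
  set f : Fin N → Ω → ℝ := fun i => ((A i)ᶜ).indicator (fun _ => (1:ℝ)) with hf
  set X : Ω → ℝ := fun x => ∑ i, f i x with hX
  set m : ℝ := ∑ i, q i with hm
  set r : Fin N → Fin N → ℝ := fun i j => (μ ((A i)ᶜ ∩ (A j)ᶜ)).toReal with hr
  have hfint : ∀ i, Integrable (f i) μ :=
    fun i => (integrable_const (1:ℝ)).indicator (hAmeas i).compl
  have hXint : Integrable X μ := integrable_finset_sum _ (fun i _ => hfint i)
  have hintf : ∀ i, ∫ x, f i x ∂μ = q i := by
    intro i
    rw [hf]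
    rw [integral_indicator_const (1:ℝ) (hAmeas i).compl]
    simp [hqdef, Measure.real]
  have hEX : ∫ x, X x ∂μ = m := by
    rw [hX]
    rw [integral_finset_sum _ (fun i _ => hfint i)]
    simp [hintf, hm]
  -- X * X as double sum of indicators
  have hXsq : ∀ x, X x * X x = ∑ i, ∑ j, ((A i)ᶜ ∩ (A j)ᶜ).indicator (fun _ => (1:ℝ)) x := by
    intro x
    rw [hX, Finset.sum_mul_sum]
    refine Finset.sum_congr rfl fun i _ => Finset.sum_congr rfl fun j _ => ?_
    have := congrFun (Set.inter_indicator_one (s := (A i)ᶜ) (t := (A j)ᶜ) (M₀ := ℝ)) x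
    simpa [hf, Set.indicator] using this.symm
  have hX2int : Integrable (fun x => X x * X x) μ := by
    have : Integrable (fun x => ∑ i : Fin N, ∑ j : Fin N,
        ((A i)ᶜ ∩ (A j)ᶜ).indicator (fun _ => (1:ℝ)) x) μ :=
      integrable_finset_sum _ (fun i _ => integrable_finset_sum _ (fun j _ =>
        (integrable_const (1:ℝ)).indicator ((hAmeas i).compl.inter (hAmeas j).compl)))
    exact this.congr (by filter_upwards with x using (hXsq x).symm)
  have hEX2 : ∫ x, X x * X x ∂μ = ∑ i, ∑ j, r i j := by
    rw [MeasureTheory.integral_congr_ae (by filter_upwards with x using hXsq x)]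
    rw [integral_finset_sum _ (fun i _ => integrable_finset_sum _ (fun j _ =>
      (integrable_const (1:ℝ)).indicator ((hAmeas i).compl.inter (hAmeas j).compl)))]
    refine Finset.sum_congr rfl fun i _ => ?_
    rw [integral_finset_sum _ (fun j _ =>
      (integrable_const (1:ℝ)).indicator ((hAmeas i).compl.inter (hAmeas j).compl))]
    refine Finset.sum_congr rfl fun j _ => ?_
    rw [integral_indicator_const (1:ℝ) ((hAmeas i).compl.inter (hAmeas j).compl)]
    simp [hr, Measure.real]
  -- integrability of (X - m)^2
  have hVint : Integrable (fun x => (X x - m) ^ 2) μ := by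
    have h1 : Integrable (fun x => X x * X x - (2 * m) * X x + m ^ 2) μ :=
      (hX2int.sub (hXint.const_mul (2 * m))).add (integrable_const _)
    exact h1.congr (by filter_upwards with x; ring)
  -- Chebyshev pointwise bound
  set S : Set Ω := ⋂ i, A i with hS
  have hSmeas : MeasurableSet S := MeasurableSet.iInter (fun i => hAmeas i)
  have hptwise : ∀ x, S.indicator (fun _ => m ^ 2) x ≤ (X x - m) ^ 2 := by
    intro x
    by_cases hx : x ∈ S
    · have hX0 : X x = 0 := by
        rw [hX]
        refine Finset.sum_eq_zero fun i _ => ?_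
        have : x ∈ A i := Set.mem_iInter.mp hx i
        simp [hf, Set.indicator_of_notMem, this]
      rw [Set.indicator_of_mem hx, hX0]
      ring_nf
      exact le_refl _
    · rw [Set.indicator_of_notMem hx]
      positivity
  have hcheb : (μ S).toReal * m ^ 2 ≤ ∫ x, (X x - m) ^ 2 ∂μ := by
    have := integral_mono ((integrable_const (m^2 : ℝ)).indicator hSmeas) hVint hptwise
    rwa [integral_indicator_const _ hSmeas, smul_eq_mul] at this
  have hvar : ∫ x, (X x - m) ^ 2 ∂μ = (∑ i, ∑ j, r i j) - m ^ 2 := by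
    have hi1 : Integrable (fun x => X x * X x - 2 * m * X x) μ := by
      exact hX2int.sub (hXint.const_mul (2 * m))
    have heq : ∫ x, (X x - m) ^ 2 ∂μ = ∫ x, (X x * X x - 2 * m * X x) + m ^ 2 ∂μ :=
      integral_congr_ae (by filter_upwards with x; ring_nf)
    rw [heq, integral_add hi1 (integrable_const _),
      integral_sub hX2int (hXint.const_mul (2 * m)),
      integral_const_mul, hEX, hEX2, integral_const]
    simp
    ring
  -- bound r i j
  have hrij : ∀ i j, r i j ≤ q i * q j + δ + (if i = j then 1 else 0) := by
    intro i j
    by_cases hij : i = j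
    · subst hij
      simp only [if_pos rfl, hr, Set.inter_self, if_true, eq_self_iff_true]
      have h1 : (μ (A i)ᶜ).toReal = q i := rfl
      rw [h1]
      nlinarith [hqω i, hq1 i, hω, hδ, sq_nonneg (q i)]
    · simp only [if_neg hij, add_zero]
      have hiu : (A i)ᶜ ∩ (A j)ᶜ = (A i ∪ A j)ᶜ := (Set.compl_union _ _).symm
      have h1 : (μ ((A i)ᶜ ∩ (A j)ᶜ)).toReal = 1 - (μ (A i ∪ A j)).toReal := by
        rw [hiu, prob_compl_eq_one_sub ((hAmeas i).union (hAmeas j))]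
        rw [ENNReal.toReal_sub_of_le prob_le_one ENNReal.one_ne_top, ENNReal.toReal_one]
      have h2 : (μ (A i ∪ A j)).toReal + (μ (A i ∩ A j)).toReal = p i + p j := by
        have := measure_union_add_inter (μ := μ) (A i) (hAmeas j)
        have h3 := congrArg ENNReal.toReal this
        rwa [ENNReal.toReal_add (measure_ne_top μ _) (measure_ne_top μ _),
          ENNReal.toReal_add (measure_ne_top μ _) (measure_ne_top μ _)] at h3
      have h4 : (μ (A i ∩ A j)).toReal ≤ p i * p j + δ := hpair i j hij
      simp only [hr]
      rw [h1, hq_eq i, hq_eq j]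
      nlinarith [h2, h4]
  -- sum the bound
  have hsum : (∑ i, ∑ j, r i j) ≤ m * m + N ^ 2 * δ + N := by
    have h1 : (∑ i, ∑ j, r i j) ≤ ∑ i : Fin N, ∑ j : Fin N,
        (q i * q j + δ + (if i = j then (1:ℝ) else 0)) :=
      Finset.sum_le_sum fun i _ => Finset.sum_le_sum fun j _ => hrij i j
    have h2 : (∑ i : Fin N, ∑ j : Fin N, (q i * q j + δ + (if i = j then (1:ℝ) else 0)))
        = m * m + N ^ 2 * δ + N := by
      simp only [Finset.sum_add_distrib, Finset.sum_const, Finset.card_univ,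
        Fintype.card_fin, nsmul_eq_mul, Finset.sum_ite_eq, Finset.mem_univ, if_pos]
      rw [← Finset.sum_mul_sum]
      push_cast
      ring
    linarith
  -- conclude
  have hm_lb : (N : ℝ) * ω ≤ m := by
    rw [hm]
    calc (N : ℝ) * ω = ∑ _i : Fin N, ω := by simp [mul_comm]
    _ ≤ ∑ i, q i := Finset.sum_le_sum fun i _ => hqω i
  have hN1 : (1 : ℝ) ≤ N := by exact_mod_cast hN
  have hNpos : (0 : ℝ) < N := by linarith
  have ht0 : 0 ≤ (μ S).toReal := ENNReal.toReal_nonneg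
  have ht1 : (μ S).toReal * (N * ω) ^ 2 ≤ (μ S).toReal * m ^ 2 := by
    apply mul_le_mul_of_nonneg_left _ ht0
    have : 0 < (N:ℝ) * ω := by positivity
    nlinarith
  have hkey : (μ S).toReal * (N * ω) ^ 2 ≤ N + N ^ 2 * δ := by
    have := hcheb
    rw [hvar] at this
    nlinarith
  have hfin : (μ S).toReal * ((N:ℝ)^2 * ω ^ 2) ≤ (N:ℝ) ^ 2 * δ + 3 * N := by
    nlinarith [hkey, hN1, hNpos]
  have hN2 : (0:ℝ) < (N:ℝ)^2 := by positivity
  rw [div_mul_eq_mul_div, le_div_iff₀ (by positivity : (0:ℝ) < ω ^ 2), one_mul]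
  have h3N : (3 / (N:ℝ)) * (N:ℝ)^2 = 3 * N := by field_simp
  have h5 : (μ S).toReal * ω ^ 2 * (N:ℝ)^2 ≤ (δ + 3 / N) * (N:ℝ)^2 := by nlinarith [hfin]
  exact le_of_mul_le_mul_right h5 hN2
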